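/- Let d ≥ 2 and let P be a probability measure on Ω = {0,1}^{Z^d} satisfying A1–A4. Then for every e ∈ Z^d with |e|₁ = 1 and every p ≥ 1, the chemical distance from the origin to the first point of S_∞ on the ray in direction e has finite p-th moment under P₀; that is, with n_e(ω) = min{k > 0 : k·e ∈ S_∞}, one has E₀[ρ_S(0, n_e·e)^p] < ∞. -/

import Mathlib

open MeasureTheory Filter
open scoped ENNReal

namespace Perco

/-- A point of the lattice `ℤ^d`. -/
abbrev Pt (d : ℕ) := Fin d → ℤ

/-- A percolation configuration on `ℤ^d`. -/
abbrev Config (d : ℕ) := Pt d → Bool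

variable {d : ℕ}

/-- The `ℓ¹`-distance on `ℤ^d`. -/
def dist1 (x y : Pt d) : ℕ := ∑ i, (x i - y i).natAbs

/-- The `ℓ^∞`-distance on `ℤ^d`. -/
def distInf (x y : Pt d) : ℕ := Finset.univ.sup fun i => (x i - y i).natAbs

/-- The closed `ℓ^∞`-ball of radius `R` around `x`. -/
def ballZ (x : Pt d) (R : ℕ) : Set (Pt d) := {y | distInf x y ≤ R}

/-- Nearest-neighbour adjacency in `ℤ^d`. -/
def adj (x y : Pt d) : Prop := dist1 x y = 1

/-- The occupied set of a configuration. -/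
def SS (ω : Config d) : Set (Pt d) := {x | ω x = true}

/-- One step of a nearest-neighbour path staying inside `T`. -/
def stepRel (T : Set (Pt d)) (x y : Pt d) : Prop := adj x y ∧ x ∈ T ∧ y ∈ T

/-- `x` and `y` are connected by a nearest-neighbour path inside `T`. -/
def connIn (T : Set (Pt d)) (x y : Pt d) : Prop :=
  x ∈ T ∧ y ∈ T ∧ Relation.ReflTransGen (stepRel T) x y

/-- The connected component (cluster) of `x` in `T`. -/
def cluster (T : Set (Pt d)) (x : Pt d) : Set (Pt d) := {y | connIn T x y}

/-- `S_r`: vertices of `S(ω)` in connected components of `ℓ¹`-diameter at least `r`. -/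
def Sr (ω : Config d) (r : ℝ) : Set (Pt d) :=
  {x | x ∈ SS ω ∧ ∃ y ∈ cluster (SS ω) x, ∃ z ∈ cluster (SS ω) x, r ≤ (dist1 y z : ℝ)}

/-- `S_∞`: vertices of `S(ω)` in infinite connected components. -/
def Sinf (ω : Config d) : Set (Pt d) := {x | x ∈ SS ω ∧ (cluster (SS ω) x).Infinite}

/-- The shift of a configuration by `x`. -/
def shift (x : Pt d) (ω : Config d) : Config d := fun y => ω (x + y)

/-- An increasing event. -/
def IncreasingEvent (G : Set (Config d)) : Prop :=
  ∀ ω ω' : Config d, (∀ x, ω x = true → ω' x = true) → ω ∈ G → ω' ∈ G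

/-- A decreasing event. -/
def DecreasingEvent (G : Set (Config d)) : Prop :=
  ∀ ω ω' : Config d, (∀ x, ω' x = true → ω x = true) → ω ∈ G → ω' ∈ G

/-- The event `G` depends only on the coordinates in `B`. -/
def DependsOn (G : Set (Config d)) (B : Set (Pt d)) : Prop :=
  ∀ ω ω' : Config d, (∀ x ∈ B, ω x = ω' x) → (ω ∈ G ↔ ω' ∈ G)

/-- The edge boundary of `A` in `Sset`: (directed representatives of) edges of `ℤ^d`
with one endpoint in `A` and the other in `Sset \ A`. -/
def edgeBd (Sset A : Set (Pt d)) : Set (Pt d × Pt d) :=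
  {p | adj p.1 p.2 ∧ p.1 ∈ A ∧ p.2 ∈ Sset \ A}

/-- The density `η(u) = P[0 ∈ S_∞]` of the infinite cluster. -/
noncomputable def eta (d : ℕ) (P : Measure (Config d)) : ℝ :=
  (P {ω | (0 : Pt d) ∈ Sinf ω}).toReal

/-- The first local-uniqueness event of axiom S1. -/
def locUniq1 (d : ℕ) (R : ℕ) : Set (Config d) :=
  {ω | (Sr ω R ∩ ballZ (0 : Pt d) R).Nonempty}

/-- The second local-uniqueness event of axiom S1. -/
def locUniq2 (d : ℕ) (R : ℕ) : Set (Config d) :=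
  {ω | ∀ x ∈ Sr ω ((R : ℝ)/10) ∩ ballZ (0 : Pt d) R,
       ∀ y ∈ Sr ω ((R : ℝ)/10) ∩ ballZ (0 : Pt d) R,
       connIn (SS ω ∩ ballZ (0 : Pt d) (2*R)) x y}


/-- The chemical (graph) distance inside `T`, with value `⊤` if there is no path. -/
noncomputable def chemDist (T : Set (Pt d)) (x y : Pt d) : ℕ∞ :=
  sInf {n : ℕ∞ | ∃ m : ℕ, n = (m : ℕ∞) ∧ ∃ p : ℕ → Pt d, p 0 = x ∧ p m = y ∧
    (∀ k, k ≤ m → p k ∈ T) ∧ ∀ k, k < m → adj (p k) (p (k+1))}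

/-- The chemical ball `B_S(x,R)` in the configuration `ω`. -/
noncomputable def chemBall (ω : Config d) (x : Pt d) (R : ℕ) : Set (Pt d) :=
  {y | chemDist (SS ω) x y ≤ (R : ℕ∞)}

/-- `n_e(ω)`: the first positive `k` with `k·e ∈ S_∞`. -/
noncomputable def firstOnRay (ω : Config d) (e : Pt d) : ℕ :=
  sInf {k : ℕ | 0 < k ∧ ((k : ℤ) • e) ∈ Sinf ω}

/-- A nearest-neighbour path of length `m` inside `T` from `x` to `y`. -/
def IsPathN (T : Set (Pt d)) (x y : Pt d) (m : ℕ) (p : ℕ → Pt d) : Prop :=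
  p 0 = x ∧ p m = y ∧ (∀ k, k ≤ m → p k ∈ T) ∧ ∀ k, k < m → adj (p k) (p (k+1))


lemma connIn_iff_path (T : Set (Pt d)) (x y : Pt d) :
    connIn T x y ↔ ∃ m : ℕ, ∃ p : ℕ → Pt d, IsPathN T x y m p := by
  constructor
  · rintro ⟨hx, -, h⟩
    induction h with
    | refl => exact ⟨0, fun _ => x, rfl, rfl, fun k _ => hx, fun k hk => absurd hk (by omega)⟩
    | @tail b c hab hbc ih =>
      obtain ⟨m, p, hp0, hpm, hpT, hpadj⟩ := ih
      obtain ⟨hadj, hbT, hcT⟩ := hbc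
      refine ⟨m+1, fun k => if k ≤ m then p k else c, by simp [hp0], by simp, ?_, ?_⟩
      · intro k hk
        by_cases h : k ≤ m
        · simpa [h] using hpT k h
        · simpa [h] using hcT
      · intro k hk
        by_cases h : k < m
        · simpa [(show k ≤ m by omega), (show k+1 ≤ m by omega)] using hpadj k h
        · have hkm : k = m := by omega
          subst hkm
          simpa [hpm, (show ¬ (k+1 ≤ k) by omega)] using hadj
  · rintro ⟨m, p, hp0, hpm, hpT, hpadj⟩
    refine ⟨hp0 ▸ hpT 0 (by omega), hpm ▸ hpT m le_rfl, ?_⟩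
    have H : ∀ j, j ≤ m → Relation.ReflTransGen (stepRel T) x (p j) := by
      intro j
      induction j with
      | zero => intro _; exact hp0 ▸ Relation.ReflTransGen.refl
      | succ i ih =>
        intro hij
        exact (ih (by omega)).tail ⟨hpadj i (by omega), hpT i (by omega), hpT (i+1) hij⟩
    exact hpm ▸ H m le_rfl

lemma chemDist_le_iff (T : Set (Pt d)) (x y : Pt d) (n : ℕ) :
    chemDist T x y ≤ (n : ℕ∞) ↔ ∃ m : ℕ, m ≤ n ∧ ∃ p : ℕ → Pt d, IsPathN T x y m p := by
  constructor
  · intro h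
    set A := {m : ℕ | ∃ p : ℕ → Pt d, IsPathN T x y m p} with hA
    have hS : {nn : ℕ∞ | ∃ m : ℕ, nn = (m : ℕ∞) ∧ ∃ p : ℕ → Pt d, p 0 = x ∧ p m = y ∧
        (∀ k, k ≤ m → p k ∈ T) ∧ ∀ k, k < m → adj (p k) (p (k+1))} = (fun m : ℕ => (m : ℕ∞)) '' A := by
      ext nn
      constructor
      · rintro ⟨m, rfl, p, h1, h2, h3, h4⟩; exact ⟨m, ⟨p, h1, h2, h3, h4⟩, rfl⟩
      · rintro ⟨m, ⟨p, h1, h2, h3, h4⟩, rfl⟩; exact ⟨m, rfl, p, h1, h2, h3, h4⟩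
    rcases A.eq_empty_or_nonempty with hemp | hne
    · exfalso
      rw [chemDist, hS, hemp] at h
      simp only [Set.image_empty, sInf_empty, top_le_iff] at h
      exact absurd h (by simp)
    · have hmem : sInf A ∈ A := Nat.sInf_mem hne
      refine ⟨sInf A, ?_, hmem⟩
      have : chemDist T x y = ((sInf A : ℕ) : ℕ∞) := by
        rw [chemDist, hS]
        apply le_antisymm
        · exact sInf_le ⟨sInf A, hmem, rfl⟩
        · apply le_sInf
          rintro b ⟨m, hm, rfl⟩
          show ((sInf A : ℕ) : ℕ∞) ≤ (m : ℕ∞)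
          exact_mod_cast Nat.sInf_le hm
      rw [this] at h
      exact_mod_cast h
  · rintro ⟨m, hmn, p, hp⟩
    calc chemDist T x y ≤ (m : ℕ∞) := sInf_le ⟨m, rfl, p, hp⟩
    _ ≤ (n : ℕ∞) := by exact_mod_cast hmn

lemma measurableSet_coord (z : Pt d) : MeasurableSet {ω : Config d | ω z = true} := by
  have h : {ω : Config d | ω z = true} = (fun ω : Config d => ω z) ⁻¹' {true} := by ext ω; simp
  rw [h]
  exact measurable_pi_apply z (MeasurableSet.singleton true)

lemma measurableSet_existsPath (x y : Pt d) (m : ℕ) :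
    MeasurableSet {ω : Config d | ∃ p : ℕ → Pt d, IsPathN (SS ω) x y m p} := by
  have : {ω : Config d | ∃ p : ℕ → Pt d, IsPathN (SS ω) x y m p} =
      ⋃ (q : Fin (m+1) → Pt d), ⋃ (_ : q 0 = x ∧ q (Fin.last m) = y ∧
        ∀ k : Fin m, adj (q k.castSucc) (q k.succ)),
        {ω : Config d | ∀ k : Fin (m+1), ω (q k) = true} := by
    ext ω
    simp only [Set.mem_setOf_eq, Set.mem_iUnion]
    constructor
    · rintro ⟨p, hp0, hpm, hpT, hpadj⟩
      refine ⟨fun k => p k.val, ⟨hp0, hpm, ?_⟩, ?_⟩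
      · intro k
        simpa using hpadj k.val k.isLt
      · intro k
        exact hpT k.val (by omega)
    · rintro ⟨q, ⟨hq0, hqm, hqadj⟩, hqT⟩
      refine ⟨fun k => q ⟨min k m, by omega⟩, ?_, ?_, ?_, ?_⟩
      · simpa using hq0
      · simpa [Fin.last] using hqm
      · intro k hk
        exact hqT _
      · intro k hk
        have h1 : min k m = k := by omega
        have h2 : min (k+1) m = k+1 := by omega
        have := hqadj ⟨k, hk⟩
        simpa [h1, h2, Fin.castSucc, Fin.succ] using this
  rw [this]
  refine MeasurableSet.iUnion fun q => MeasurableSet.iUnion fun _ => ?_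
  have : {ω : Config d | ∀ k : Fin (m+1), ω (q k) = true} =
      ⋂ k : Fin (m+1), {ω : Config d | ω (q k) = true} := by ext ω; simp
  rw [this]
  exact MeasurableSet.iInter fun k => measurableSet_coord (q k)

lemma measurableSet_connIn (x y : Pt d) :
    MeasurableSet {ω : Config d | connIn (SS ω) x y} := by
  have : {ω : Config d | connIn (SS ω) x y} =
      ⋃ m : ℕ, {ω : Config d | ∃ p : ℕ → Pt d, IsPathN (SS ω) x y m p} := by
    ext ω; simp [connIn_iff_path]
  rw [this]
  exact MeasurableSet.iUnion fun m => measurableSet_existsPath x y m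

lemma measurableSet_chemDist_le (x y : Pt d) (n : ℕ) :
    MeasurableSet {ω : Config d | chemDist (SS ω) x y ≤ (n : ℕ∞)} := by
  have : {ω : Config d | chemDist (SS ω) x y ≤ (n : ℕ∞)} =
      ⋃ (m : ℕ), ⋃ (_ : m ≤ n), {ω : Config d | ∃ p : ℕ → Pt d, IsPathN (SS ω) x y m p} := by
    ext ω; simp [chemDist_le_iff]
  rw [this]
  exact MeasurableSet.iUnion fun m => MeasurableSet.iUnion fun _ => measurableSet_existsPath x y m

lemma infinite_iff_finset (s : Set (Pt d)) :
    s.Infinite ↔ ∀ F : Finset (Pt d), ∃ z ∈ s, z ∉ F := by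
  constructor
  · intro hs F
    exact (hs.diff F.finite_toSet).nonempty.imp fun z hz => ⟨hz.1, hz.2⟩
  · intro h
    by_contra hfin
    rw [Set.not_infinite] at hfin
    obtain ⟨z, hz, hz'⟩ := h hfin.toFinset
    exact hz' (hfin.mem_toFinset.mpr hz)

lemma measurableSet_mem_Sinf (x : Pt d) :
    MeasurableSet {ω : Config d | x ∈ Sinf ω} := by
  have : {ω : Config d | x ∈ Sinf ω} =
      {ω : Config d | ω x = true} ∩
      ⋂ (F : Finset (Pt d)), ⋃ (z : Pt d), ⋃ (_ : z ∉ F), {ω : Config d | connIn (SS ω) x z} := by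
    ext ω
    simp only [Sinf, Set.mem_setOf_eq, Set.mem_inter_iff, Set.mem_iInter, Set.mem_iUnion, SS,
      infinite_iff_finset]
    constructor
    · rintro ⟨h1, h2⟩
      exact ⟨h1, fun F => (h2 F).imp fun z hz => ⟨hz.2, hz.1⟩⟩
    · rintro ⟨h1, h2⟩
      exact ⟨h1, fun F => (h2 F).imp fun z hz => ⟨hz.2, hz.1⟩⟩
  rw [this]
  exact (measurableSet_coord x).inter
    (MeasurableSet.iInter fun F => MeasurableSet.iUnion fun z => MeasurableSet.iUnion fun _ =>
      measurableSet_connIn x z)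

lemma sInf_eq_iff_aux (A : Set ℕ) (hA0 : 0 ∉ A) (k : ℕ) :
    sInf A = k ↔ (k ∈ A ∧ ∀ j < k, j ∉ A) ∨ (k = 0 ∧ ∀ j, j ∉ A) := by
  constructor
  · intro h
    rcases A.eq_empty_or_nonempty with hemp | hne
    · right
      refine ⟨?_, fun j hj => by simp [hemp] at hj⟩
      rw [← h, hemp, Nat.sInf_empty]
    · left
      exact ⟨h ▸ Nat.sInf_mem hne, fun j hj => Nat.notMem_of_lt_sInf (h ▸ hj)⟩
  · rintro (⟨hk, hmin⟩ | ⟨rfl, hemp⟩)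
    · refine le_antisymm (Nat.sInf_le hk) ?_
      by_contra hlt
      push_neg at hlt
      exact hmin _ hlt (Nat.sInf_mem ⟨k, hk⟩)
    · have : A = ∅ := Set.eq_empty_iff_forall_notMem.mpr hemp
      rw [this, Nat.sInf_empty]

lemma measurableSet_firstOnRay_eq (e : Pt d) (k : ℕ) :
    MeasurableSet {ω : Config d | firstOnRay ω e = k} := by
  have hmemA : ∀ j : ℕ, MeasurableSet {ω : Config d | 0 < j ∧ ((j : ℤ) • e) ∈ Sinf ω} := by
    intro j
    have : {ω : Config d | 0 < j ∧ ((j : ℤ) • e) ∈ Sinf ω} =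
        ⋃ (_ : 0 < j), {ω : Config d | ((j : ℤ) • e) ∈ Sinf ω} := by
      ext ω; simp [Set.mem_iUnion]
    rw [this]
    exact MeasurableSet.iUnion fun _ => measurableSet_mem_Sinf _
  have key : {ω : Config d | firstOnRay ω e = k} =
      ({ω : Config d | 0 < k ∧ ((k : ℤ) • e) ∈ Sinf ω} ∩
        ⋂ (j : ℕ), ⋂ (_ : j < k), {ω : Config d | 0 < j ∧ ((j : ℤ) • e) ∈ Sinf ω}ᶜ) ∪
      ⋃ (_ : k = 0), ⋂ (j : ℕ), {ω : Config d | 0 < j ∧ ((j : ℤ) • e) ∈ Sinf ω}ᶜ := by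
    ext ω
    have := sInf_eq_iff_aux {j : ℕ | 0 < j ∧ ((j : ℤ) • e) ∈ Sinf ω} (by simp) k
    simp only [firstOnRay, Set.mem_setOf_eq] at this ⊢
    rw [this]
    simp only [Set.mem_union, Set.mem_inter_iff, Set.mem_iInter, Set.mem_iUnion, Set.mem_compl_iff,
      Set.mem_setOf_eq]
    tauto
  rw [key]
  exact ((hmemA k).inter (MeasurableSet.iInter fun j => MeasurableSet.iInter fun _ =>
      (hmemA j).compl)).union
    (MeasurableSet.iUnion fun _ => MeasurableSet.iInter fun j => (hmemA j).compl)

lemma measurableSet_chemDist_toNat_eq (x y : Pt d) (n : ℕ) :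
    MeasurableSet {ω : Config d | (chemDist (SS ω) x y).toNat = n} := by
  rcases Nat.eq_zero_or_pos n with rfl | hn
  · have : {ω : Config d | (chemDist (SS ω) x y).toNat = 0} =
        {ω : Config d | chemDist (SS ω) x y ≤ ((0 : ℕ) : ℕ∞)} ∪
        ⋂ m : ℕ, {ω : Config d | chemDist (SS ω) x y ≤ ((m : ℕ) : ℕ∞)}ᶜ := by
      ext ω
      simp only [Set.mem_setOf_eq, Set.mem_union, Set.mem_iInter, Set.mem_compl_iff]
      cases h : chemDist (SS ω) x y using ENat.recTopCoe with
      | top => simp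
      | coe m =>
        simp only [ENat.toNat_coe, Nat.cast_le, nonpos_iff_eq_zero, not_le]
        constructor
        · intro h; exact Or.inl h
        · rintro (h | h)
          · exact h
          · exact absurd (h m) (lt_irrefl m)
    rw [this]
    exact (measurableSet_chemDist_le x y 0).union
      (MeasurableSet.iInter fun m => (measurableSet_chemDist_le x y m).compl)
  · have : {ω : Config d | (chemDist (SS ω) x y).toNat = n} =
        {ω : Config d | chemDist (SS ω) x y ≤ ((n : ℕ) : ℕ∞)} ∩
        {ω : Config d | chemDist (SS ω) x y ≤ ((n - 1 : ℕ) : ℕ∞)}ᶜ := by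
      ext ω
      simp only [Set.mem_setOf_eq, Set.mem_inter_iff, Set.mem_compl_iff]
      cases h : chemDist (SS ω) x y using ENat.recTopCoe with
      | top =>
        rw [show (⊤ : ℕ∞).toNat = 0 from rfl]
        constructor
        · intro h; omega
        · rintro ⟨h1, -⟩
          exact absurd h1 (by simp)
      | coe m =>
        simp only [ENat.toNat_coe, Nat.cast_le]
        omega
    rw [this]
    exact (measurableSet_chemDist_le x y n).inter (measurableSet_chemDist_le x y (n-1)).compl

lemma measurable_rho (e : Pt d) :
    Measurable (fun ω : Config d => (chemDist (SS ω) 0 ((firstOnRay ω e : ℤ) • e)).toNat) := by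
  apply measurable_to_countable'
  intro n
  have : (fun ω : Config d => (chemDist (SS ω) 0 ((firstOnRay ω e : ℤ) • e)).toNat) ⁻¹' {n} =
      ⋃ k : ℕ, {ω : Config d | firstOnRay ω e = k} ∩
        {ω : Config d | (chemDist (SS ω) 0 ((k : ℤ) • e)).toNat = n} := by
    ext ω
    simp only [Set.mem_preimage, Set.mem_singleton_iff, Set.mem_iUnion, Set.mem_inter_iff,
      Set.mem_setOf_eq]
    constructor
    · intro h; exact ⟨firstOnRay ω e, rfl, h⟩
    · rintro ⟨k, rfl, h⟩; exact h
  rw [this]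
  exact MeasurableSet.iUnion fun k =>
    (measurableSet_firstOnRay_eq e k).inter (measurableSet_chemDist_toNat_eq 0 _ n)

lemma adj_add (z x y : Pt d) : adj (z + x) (z + y) ↔ adj x y := by
  unfold adj dist1
  have : ∀ i, ((z + x) i - (z + y) i).natAbs = (x i - y i).natAbs := by
    intro i
    congr 1
    simp only [Pi.add_apply]
    ring
  rw [Finset.sum_congr rfl fun i _ => this i]

lemma mem_SS_shift (z : Pt d) (ω : Config d) (y : Pt d) :
    y ∈ SS (shift z ω) ↔ z + y ∈ SS ω := Iff.rfl

lemma shift_shift (a b : Pt d) (ω : Config d) : shift a (shift b ω) = shift (b + a) ω := by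
  funext w
  simp [shift, add_assoc]

lemma shift_zero (ω : Config d) : shift (0 : Pt d) ω = ω := by
  funext w; simp [shift]

lemma connIn_shift_fwd (z : Pt d) (ω : Config d) (x y : Pt d)
    (h : connIn (SS (shift z ω)) x y) : connIn (SS ω) (z + x) (z + y) := by
  rw [connIn_iff_path] at h ⊢
  obtain ⟨m, p, hp0, hpm, hpT, hpadj⟩ := h
  refine ⟨m, fun k => z + p k, by simp [hp0], by simp [hpm], ?_, ?_⟩
  · intro k hk
    exact (mem_SS_shift z ω (p k)).mp (hpT k hk)
  · intro k hk
    exact (adj_add z _ _).mpr (hpadj k hk)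

lemma connIn_shift (z : Pt d) (ω : Config d) (x y : Pt d) :
    connIn (SS (shift z ω)) x y ↔ connIn (SS ω) (z + x) (z + y) := by
  constructor
  · exact connIn_shift_fwd z ω x y
  · intro h
    have h2 := connIn_shift_fwd (-z) (shift z ω) (z + x) (z + y)
    rw [shift_shift, add_neg_cancel, shift_zero] at h2
    simpa [neg_add_cancel_left] using h2 h

lemma mem_Sinf_shift (z : Pt d) (ω : Config d) (x : Pt d) :
    x ∈ Sinf (shift z ω) ↔ z + x ∈ Sinf ω := by
  have hconn : ∀ y, connIn (SS (shift z ω)) x y ↔ connIn (SS ω) (z + x) (z + y) :=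
    fun y => connIn_shift z ω x y
  have hcl : cluster (SS ω) (z + x) = (fun y => z + y) '' cluster (SS (shift z ω)) x := by
    ext w
    simp only [cluster, Set.mem_setOf_eq, Set.mem_image]
    constructor
    · intro h
      refine ⟨w - z, (hconn (w - z)).mpr ?_, by ring⟩
      have : z + (w - z) = w := by ring
      rwa [this]
    · rintro ⟨y, hy, rfl⟩
      exact (hconn y).mp hy
  unfold Sinf
  simp only [Set.mem_setOf_eq]
  constructor
  · rintro ⟨h1, h2⟩
    exact ⟨h1, by rw [hcl]; exact h2.image ((add_right_injective z).injOn)⟩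
  · rintro ⟨h1, h2⟩
    refine ⟨h1, ?_⟩
    rw [hcl] at h2
    exact (Set.infinite_image_iff (add_right_injective z).injOn).mp h2

lemma unit_comp_le (e : Pt d) (he : dist1 (0 : Pt d) e = 1) (i : Fin d) : (e i).natAbs ≤ 1 := by
  unfold dist1 at he
  calc (e i).natAbs = ((0 : Pt d) i - e i).natAbs := by simp
  _ ≤ ∑ j, ((0 : Pt d) j - e j).natAbs :=
      Finset.single_le_sum (f := fun j => ((0:Pt d) j - e j).natAbs) (fun j _ => Nat.zero_le _) (Finset.mem_univ i)
  _ = 1 := he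

lemma distInf_smul_le (e : Pt d) (he : dist1 (0 : Pt d) e = 1) (n : ℕ) :
    distInf (0 : Pt d) ((n : ℤ) • e) ≤ n := by
  unfold distInf
  apply Finset.sup_le
  intro i _
  have h1 : (((0 : Pt d) i - ((n : ℤ) • e) i)).natAbs = n * (e i).natAbs := by
    simp [Int.natAbs_mul]
  rw [h1]
  calc n * (e i).natAbs ≤ n * 1 := Nat.mul_le_mul_left n (unit_comp_le e he i)
  _ = n := Nat.mul_one n

lemma toNat_le_of_le {c : ℕ∞} {M : ℕ} (h : c ≤ (M : ℕ∞)) : c.toNat ≤ M := by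
  cases c using ENat.recTopCoe with
  | top => exact absurd h (by simp)
  | coe m => exact_mod_cast h

/-- The deterministic core: on the good events, `ρ_S(0, n_e e) ≤ M`. -/
lemma rho_le_on_good (e : Pt d) (he : dist1 (0 : Pt d) e = 1) (ω : Config d) (R M : ℕ)
    (h0 : (0 : Pt d) ∈ Sinf ω)
    (h1 : ∃ k : ℕ, k ≤ R ∧ (((k : ℕ) + 1 : ℤ) • e) ∈ Sinf ω)
    (h2 : ∀ x ∈ Sinf ω ∩ ballZ (0 : Pt d) (R+1), ∀ y ∈ Sinf ω ∩ ballZ (0 : Pt d) (R+1),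
      chemDist (SS ω) x y ≤ (M : ℕ∞)) :
    (chemDist (SS ω) (0 : Pt d) ((firstOnRay ω e : ℤ) • e)).toNat ≤ M := by
  obtain ⟨k, hk, hmem⟩ := h1
  have hmem' : (((k+1 : ℕ) : ℤ) • e) ∈ Sinf ω := by exact_mod_cast hmem
  have hne : {j : ℕ | 0 < j ∧ ((j : ℤ) • e) ∈ Sinf ω}.Nonempty := ⟨k+1, by omega, hmem'⟩
  have hinf := Nat.sInf_mem hne
  have hle : firstOnRay ω e ≤ k + 1 := Nat.sInf_le ⟨by omega, hmem'⟩
  set n := firstOnRay ω e with hn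
  have hSinf : ((n : ℤ) • e) ∈ Sinf ω := hinf.2
  have hball : ((n : ℤ) • e) ∈ ballZ (0 : Pt d) (R+1) := by
    unfold ballZ
    exact Set.mem_setOf_eq ▸ le_trans (distInf_smul_le e he n) (by omega)
  have h0ball : (0 : Pt d) ∈ ballZ (0 : Pt d) (R+1) := by
    simp [ballZ, distInf]
  exact toNat_le_of_le (h2 0 ⟨h0, h0ball⟩ _ ⟨hSinf, hball⟩)

/-- The A3-type event shifted by one step. -/
def Ev1 (e : Pt d) (R : ℕ) : Set (Config d) :=
  {ω | ∃ k : ℕ, k ≤ R ∧ (((k : ℤ) + 1) • e) ∈ Sinf ω}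

def Ev0 (e : Pt d) (R : ℕ) : Set (Config d) :=
  {ω | ∃ k : ℕ, k ≤ R ∧ ((k : ℤ) • e) ∈ Sinf ω}

def Ev2 (R M : ℕ) : Set (Config d) :=
  {ω | ∀ x ∈ Sinf ω ∩ ballZ (0 : Pt d) R, ∀ y ∈ Sinf ω ∩ ballZ (0 : Pt d) R,
      chemDist (SS ω) x y ≤ (M : ℕ∞)}

lemma measurableSet_Ev0 (e : Pt d) (R : ℕ) : MeasurableSet (Ev0 e R) := by
  have : Ev0 e R = ⋃ (k : ℕ), ⋃ (_ : k ≤ R), {ω : Config d | ((k : ℤ) • e) ∈ Sinf ω} := by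
    ext ω; simp [Ev0]
  rw [this]
  exact MeasurableSet.iUnion fun k => MeasurableSet.iUnion fun _ => measurableSet_mem_Sinf _

lemma measurableSet_Ev1 (e : Pt d) (R : ℕ) : MeasurableSet (Ev1 e R) := by
  have : Ev1 e R = ⋃ (k : ℕ), ⋃ (_ : k ≤ R), {ω : Config d | (((k : ℤ) + 1) • e) ∈ Sinf ω} := by
    ext ω; simp [Ev1]
  rw [this]
  exact MeasurableSet.iUnion fun k => MeasurableSet.iUnion fun _ => measurableSet_mem_Sinf _

lemma measurableSet_Ev2 (R M : ℕ) : MeasurableSet (Ev2 (d := d) R M) := by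
  have : Ev2 (d := d) R M = ⋂ (x : Pt d), ⋂ (y : Pt d),
      ({ω : Config d | x ∈ Sinf ω} ∩ {ω : Config d | x ∈ ballZ (0 : Pt d) R} ∩
       {ω : Config d | y ∈ Sinf ω} ∩ {ω : Config d | y ∈ ballZ (0 : Pt d) R})ᶜ ∪
      {ω : Config d | chemDist (SS ω) x y ≤ (M : ℕ∞)} := by
    ext ω
    simp only [Ev2, Set.mem_setOf_eq, Set.mem_iInter, Set.mem_union, Set.mem_compl_iff,
      Set.mem_inter_iff]
    constructor
    · intro h x y
      by_cases hc : x ∈ Sinf ω ∧ x ∈ ballZ (0:Pt d) R ∧ y ∈ Sinf ω ∧ y ∈ ballZ (0:Pt d) R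
      · exact Or.inr (h x ⟨hc.1, hc.2.1⟩ y ⟨hc.2.2.1, hc.2.2.2⟩)
      · exact Or.inl (by tauto)
    · intro h x hx y hy
      rcases h x y with hc | hc
      · exact absurd ⟨⟨⟨hx.1, hx.2⟩, hy.1⟩, hy.2⟩ hc
      · exact hc
  rw [this]
  refine MeasurableSet.iInter fun x => MeasurableSet.iInter fun y => MeasurableSet.union ?_ ?_
  · refine MeasurableSet.compl ?_
    refine MeasurableSet.inter (MeasurableSet.inter (MeasurableSet.inter ?_ ?_) ?_) ?_
    · exact measurableSet_mem_Sinf x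
    · rcases Classical.em (x ∈ ballZ (0:Pt d) R) with h | h
      · simpa [h] using MeasurableSet.univ
      · simpa [h] using MeasurableSet.empty
    · exact measurableSet_mem_Sinf y
    · rcases Classical.em (y ∈ ballZ (0:Pt d) R) with h | h
      · simpa [h] using MeasurableSet.univ
      · simpa [h] using MeasurableSet.empty
  · exact measurableSet_chemDist_le x y M

lemma Ev1_preimage (e : Pt d) (R : ℕ) : shift e ⁻¹' (Ev0 e R) = Ev1 e R := by
  ext ω
  simp only [Set.mem_preimage, Ev0, Ev1, Set.mem_setOf_eq]
  refine exists_congr fun k => and_congr_right fun _ => ?_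
  rw [mem_Sinf_shift]
  have : ((k : ℤ) + 1) • e = e + (k : ℤ) • e := by
    rw [add_smul, one_smul, add_comm]
  rw [this]

lemma incl_lemma (e : Pt d) (he : dist1 (0 : Pt d) e = 1) (R M : ℕ) :
    {ω : Config d | M < (chemDist (SS ω) (0 : Pt d) ((firstOnRay ω e : ℤ) • e)).toNat} ∩
      {ω : Config d | (0 : Pt d) ∈ Sinf ω} ⊆ (Ev1 e R)ᶜ ∪ (Ev2 (R+1) M)ᶜ := by
  rintro ω ⟨hrho, h0⟩
  by_contra hcon
  simp only [Set.mem_union, Set.mem_compl_iff, not_or, not_not] at hcon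
  obtain ⟨h1, h2⟩ := hcon
  have hle := rho_le_on_good e he ω R M h0 ?_ h2
  · exact absurd hle (by simpa using hrho)
  · obtain ⟨k, hk, hmem⟩ := h1
    exact ⟨k, hk, by exact_mod_cast hmem⟩

lemma compl_bound (P : Measure (Config d)) [IsProbabilityMeasure P]
    (E : Set (Config d)) (hE : MeasurableSet E) (b : ℝ)
    (h : 1 - b ≤ (P E).toReal) : P Eᶜ ≤ ENNReal.ofReal b := by
  rcases le_or_gt b 1 with hb | hb
  · rw [prob_compl_eq_one_sub hE]
    have h1 : ENNReal.ofReal (1 - b) ≤ P E := ENNReal.ofReal_le_of_le_toReal h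
    calc (1 : ℝ≥0∞) - P E ≤ 1 - ENNReal.ofReal (1 - b) := tsub_le_tsub_left h1 1
    _ = ENNReal.ofReal 1 - ENNReal.ofReal (1 - b) := by rw [ENNReal.ofReal_one]
    _ = ENNReal.ofReal (1 - (1 - b)) := (ENNReal.ofReal_sub 1 (by linarith)).symm
    _ = ENNReal.ofReal b := by ring_nf
  · calc P Eᶜ ≤ 1 := prob_le_one
    _ = ENNReal.ofReal 1 := ENNReal.ofReal_one.symm
    _ ≤ ENNReal.ofReal b := ENNReal.ofReal_le_ofReal hb.le

lemma step1 (P : Measure (Config d)) [IsProbabilityMeasure P]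
    (e : Pt d) (he : dist1 (0 : Pt d) e = 1)
    (hmp : MeasurePreserving (shift e) P P)
    (c3 C3 Δ3 : ℝ)
    (h3 : ∀ R : ℕ, 1 ≤ R →
      1 - C3 * Real.exp (-c3 * (Real.log R) ^ (1 + Δ3)) ≤ (P (Ev0 e R)).toReal)
    (c4 C4 Δ4 : ℝ)
    (h4 : ∀ R : ℕ, 1 ≤ R →
      1 - C4 * Real.exp (-c4 * (Real.log R) ^ (1 + Δ4)) ≤ (P (Ev2 (d := d) R ⌊C4 * (R:ℝ)⌋₊)).toReal)
    (R : ℕ) (hR : 1 ≤ R) :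
    P ({ω : Config d | ⌊C4 * ((R+1 : ℕ) : ℝ)⌋₊ <
          (chemDist (SS ω) (0 : Pt d) ((firstOnRay ω e : ℤ) • e)).toNat} ∩
        {ω : Config d | (0 : Pt d) ∈ Sinf ω}) ≤
      ENNReal.ofReal (C3 * Real.exp (-c3 * (Real.log R) ^ (1 + Δ3))) +
      ENNReal.ofReal (C4 * Real.exp (-c4 * (Real.log ((R+1 : ℕ) : ℝ)) ^ (1 + Δ4))) := by
  have hP1 : P (Ev1 e R) = P (Ev0 e R) := by
    rw [← Ev1_preimage e R]
    exact hmp.measure_preimage (measurableSet_Ev0 e R).nullMeasurableSet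
  calc P _ ≤ P ((Ev1 e R)ᶜ ∪ (Ev2 (R+1) ⌊C4 * ((R+1 : ℕ) : ℝ)⌋₊)ᶜ) :=
        measure_mono (incl_lemma e he R _)
  _ ≤ P (Ev1 e R)ᶜ + P (Ev2 (R+1) ⌊C4 * ((R+1 : ℕ) : ℝ)⌋₊)ᶜ := measure_union_le _ _
  _ ≤ _ := by
      gcongr
      · apply compl_bound P _ (measurableSet_Ev1 e R)
        rw [show (P (Ev1 e R)).toReal = (P (Ev0 e R)).toReal from by rw [hP1]]
        exact h3 R hR
      · apply compl_bound P _ (measurableSet_Ev2 (R+1) _)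
        exact h4 (R+1) (by omega)

lemma exp_poly_bound (c ci Δ Δi q : ℝ) (hc : 0 < c) (hci : c ≤ ci) (hΔ : 0 < Δ) (hΔi : Δ ≤ Δi)
    (hq : 0 < q) (S : ℝ) (hS3 : 3 ≤ S) (hSR : Real.exp ((q/c) ^ Δ⁻¹) ≤ S) :
    Real.exp (-ci * (Real.log S) ^ (1 + Δi)) ≤ S ^ (-q) := by
  have hS0 : 0 < S := by linarith
  have hlog1 : 1 ≤ Real.log S := by
    have h1 : Real.exp 1 ≤ S := by
      have := Real.exp_one_lt_d9
      linarith
    calc (1:ℝ) = Real.log (Real.exp 1) := (Real.log_exp 1).symm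
    _ ≤ Real.log S := Real.log_le_log (Real.exp_pos 1) h1
  have hlog0 : 0 < Real.log S := by linarith
  have hqc : 0 ≤ q / c := le_of_lt (div_pos hq hc)
  have hlogpow : q / c ≤ (Real.log S) ^ Δ := by
    have h1 : (q/c) ^ Δ⁻¹ ≤ Real.log S := by
      calc (q/c) ^ Δ⁻¹ = Real.log (Real.exp ((q/c) ^ Δ⁻¹)) := (Real.log_exp _).symm
      _ ≤ Real.log S := Real.log_le_log (Real.exp_pos _) hSR
    calc q / c = ((q/c) ^ Δ⁻¹) ^ Δ := by
          rw [← Real.rpow_mul hqc, inv_mul_cancel₀ hΔ.ne', Real.rpow_one]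
    _ ≤ (Real.log S) ^ Δ :=
          Real.rpow_le_rpow (Real.rpow_nonneg hqc _) h1 hΔ.le
  have hmain : q * Real.log S ≤ ci * (Real.log S) ^ (1 + Δi) := by
    have h1 : (Real.log S) ^ (1 + Δ) ≤ (Real.log S) ^ (1 + Δi) :=
      Real.rpow_le_rpow_of_exponent_le hlog1 (by linarith)
    have h2 : (Real.log S) ^ (1 + Δ) = Real.log S * (Real.log S) ^ Δ := by
      rw [Real.rpow_add hlog0, Real.rpow_one]
    have h3 : q * Real.log S ≤ c * ((Real.log S) ^ Δ * Real.log S) := by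
      have := mul_le_mul_of_nonneg_right hlogpow hlog0.le
      calc q * Real.log S = c * (q / c * Real.log S) := by field_simp
      _ ≤ c * ((Real.log S) ^ Δ * Real.log S) := by
          apply mul_le_mul_of_nonneg_left this hc.le
    calc q * Real.log S ≤ c * ((Real.log S) ^ Δ * Real.log S) := h3
    _ = c * (Real.log S) ^ (1 + Δ) := by rw [h2]; ring
    _ ≤ ci * (Real.log S) ^ (1 + Δi) := by
        apply mul_le_mul hci h1 (Real.rpow_nonneg hlog0.le _) (by linarith)
  calc Real.exp (-ci * (Real.log S) ^ (1 + Δi)) ≤ Real.exp (-(q * Real.log S)) := by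
        apply Real.exp_le_exp.mpr
        linarith
  _ = S ^ (-q) := by
        rw [Real.rpow_def_of_pos hS0]
        congr 1
        ring

lemma conv_bound (a q : ℝ) (ha : 1 ≤ a) (hq : 0 < q) (n : ℕ) (hn : 1 ≤ n) (S : ℝ) (hS : 0 < S)
    (hnS : (n : ℝ) ≤ a * S) : S ^ (-q) ≤ a ^ q * (n : ℝ) ^ (-q) := by
  have hn0 : (0:ℝ) < n := by exact_mod_cast hn
  have h1 : (n:ℝ) ^ q ≤ a ^ q * S ^ q := by
    rw [← Real.mul_rpow (by linarith) hS.le]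
    exact Real.rpow_le_rpow hn0.le hnS hq.le
  have hSq : (0:ℝ) < S ^ q := Real.rpow_pos_of_pos hS q
  have hnq : (0:ℝ) < (n:ℝ) ^ q := Real.rpow_pos_of_pos hn0 q
  rw [Real.rpow_neg hS.le, Real.rpow_neg hn0.le]
  have heq : a ^ q * ((n:ℝ)^q)⁻¹ = a ^ q / (n:ℝ)^q := by rw [div_eq_mul_inv]
  rw [heq, inv_eq_one_div, div_le_div_iff₀ hSq hnq, one_mul, mul_comm]
  linarith

lemma tail_poly (P : Measure (Config d)) [IsProbabilityMeasure P]
    (e : Pt d) (he : dist1 (0 : Pt d) e = 1)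
    (hmp : MeasurePreserving (shift e) P P)
    (c3 C3 Δ3 : ℝ) (hc3 : 0 < c3) (hC3 : 0 < C3) (hΔ3 : 0 < Δ3)
    (h3 : ∀ R : ℕ, 1 ≤ R →
      1 - C3 * Real.exp (-c3 * (Real.log R) ^ (1 + Δ3)) ≤ (P (Ev0 e R)).toReal)
    (c4 C4 Δ4 : ℝ) (hc4 : 0 < c4) (hC4 : 0 < C4) (hΔ4 : 0 < Δ4)
    (h4 : ∀ R : ℕ, 1 ≤ R →
      1 - C4 * Real.exp (-c4 * (Real.log R) ^ (1 + Δ4)) ≤ (P (Ev2 (d := d) R ⌊C4 * (R:ℝ)⌋₊)).toReal)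
    (q : ℝ) (hq : 0 < q) :
    ∃ K : ℝ, 0 ≤ K ∧ ∀ n : ℕ, 1 ≤ n →
      P ({ω : Config d | n ≤ (chemDist (SS ω) (0 : Pt d) ((firstOnRay ω e : ℤ) • e)).toNat} ∩
          {ω : Config d | (0 : Pt d) ∈ Sinf ω}) ≤
        ENNReal.ofReal (K * (n : ℝ) ^ (-q)) := by
  set c := min c3 c4 with hc_def
  set Δ := min Δ3 Δ4 with hΔ_def
  have hc : 0 < c := lt_min hc3 hc4
  have hΔ : 0 < Δ := lt_min hΔ3 hΔ4
  set R₀ : ℝ := max (Real.exp ((q/c) ^ Δ⁻¹)) 3 with hR₀_def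
  have hR₀3 : (3:ℝ) ≤ R₀ := le_max_right _ _
  set N : ℕ := ⌈(C4+1) * (R₀ + 1)⌉₊ + ⌈C4 * (C4+1)⌉₊ + 1 with hN_def
  set a : ℝ := 2 * (C4 + 1) with ha_def
  have ha1 : 1 ≤ a := by simp only [ha_def]; linarith
  set K : ℝ := max ((C3 + C4) * a ^ q) ((N : ℝ) ^ q) with hK_def
  refine ⟨K, le_trans (Real.rpow_nonneg (by positivity) q) (le_max_right _ _), ?_⟩
  intro n hn
  have hn0 : (0:ℝ) < n := by exact_mod_cast hn
  have hnq_inv_pos : (0:ℝ) ≤ (n:ℝ) ^ (-q) := (Real.rpow_pos_of_pos hn0 _).le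
  rcases lt_or_ge n N with hsmall | hlarge
  · -- small n : use P ≤ 1
    calc P _ ≤ 1 := prob_le_one
    _ ≤ ENNReal.ofReal (K * (n : ℝ) ^ (-q)) := by
        rw [show (1 : ℝ≥0∞) = ENNReal.ofReal 1 from ENNReal.ofReal_one.symm]
        apply ENNReal.ofReal_le_ofReal
        have h1 : (n:ℝ) ^ q ≤ (N:ℝ) ^ q :=
          Real.rpow_le_rpow hn0.le (by exact_mod_cast hsmall.le) hq.le
        have h2 : (n:ℝ) ^ q * (n:ℝ) ^ (-q) = 1 := by
          rw [← Real.rpow_add hn0]; simp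
        calc (1:ℝ) = (n:ℝ) ^ q * (n:ℝ) ^ (-q) := h2.symm
        _ ≤ (N:ℝ) ^ q * (n:ℝ) ^ (-q) := by
            apply mul_le_mul_of_nonneg_right h1 hnq_inv_pos
        _ ≤ K * (n:ℝ) ^ (-q) := by
            apply mul_le_mul_of_nonneg_right (le_max_right _ _) hnq_inv_pos
  · -- large n
    set R : ℕ := ⌊(n : ℝ) / (C4 + 1)⌋₊ with hR_def
    have hC41 : (0:ℝ) < C4 + 1 := by linarith
    have hNn : ((N:ℝ)) ≤ n := by exact_mod_cast hlarge
    have hNceil1 : (C4+1) * (R₀ + 1) ≤ (N:ℝ) := by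
      calc (C4+1) * (R₀ + 1) ≤ (⌈(C4+1) * (R₀ + 1)⌉₊ : ℝ) := Nat.le_ceil _
      _ ≤ (N:ℝ) := by
          rw [hN_def]; push_cast; linarith [Nat.cast_nonneg (α := ℝ) ⌈C4 * (C4+1)⌉₊]
    have hNceil2 : C4 * (C4+1) < (N:ℝ) := by
      calc C4 * (C4+1) ≤ (⌈C4 * (C4+1)⌉₊ : ℝ) := Nat.le_ceil _
      _ < (N:ℝ) := by rw [hN_def]; push_cast; linarith [Nat.cast_nonneg (α := ℝ) ⌈(C4+1) * (R₀+1)⌉₊]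
    have hdiv_nonneg : (0:ℝ) ≤ (n:ℝ) / (C4+1) := by positivity
    have hRfloor_le : ((R:ℕ):ℝ) ≤ (n:ℝ) / (C4+1) := Nat.floor_le hdiv_nonneg
    have hRfloor_gt : (n:ℝ) / (C4+1) - 1 < ((R:ℕ):ℝ) := Nat.sub_one_lt_floor _
    have hR₀R : R₀ ≤ ((R:ℕ):ℝ) := by
      have h1 : R₀ + 1 ≤ (n:ℝ) / (C4+1) := by
        rw [le_div_iff₀ hC41]
        calc (R₀ + 1) * (C4+1) = (C4+1) * (R₀+1) := by ring
        _ ≤ (N:ℝ) := hNceil1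
        _ ≤ n := hNn
      linarith
    have hR3 : (3:ℝ) ≤ ((R:ℕ):ℝ) := le_trans hR₀3 hR₀R
    have hR1 : 1 ≤ R := by exact_mod_cast le_trans (by norm_num : (1:ℝ) ≤ 3) hR3
    have hRpos : (0:ℝ) < ((R:ℕ):ℝ) := by linarith
    -- n < (C4+1)(R+1)
    have hn_lt : (n:ℝ) < (C4+1) * (((R:ℕ):ℝ) + 1) := by
      have := Nat.lt_floor_add_one ((n:ℝ) / (C4+1))
      rw [div_lt_iff₀ hC41] at this
      calc (n:ℝ) < (((R:ℕ):ℝ) + 1) * (C4+1) := this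
      _ = (C4+1) * (((R:ℕ):ℝ) + 1) := by ring
    -- the floor bound M_R < n
    have hM_lt : ⌊C4 * ((R+1 : ℕ) : ℝ)⌋₊ < n := by
      rw [Nat.floor_lt (by positivity)]
      push_cast
      have hR' : ((R:ℕ):ℝ) * (C4+1) ≤ n := by
        rw [← le_div_iff₀ hC41]; exact hRfloor_le
      have hC4N : C4 * (C4+1) < (n:ℝ) := lt_of_lt_of_le hNceil2 hNn
      nlinarith [mul_le_mul_of_nonneg_left hR' hC4.le]
    -- subset step
    have hsub : {ω : Config d | n ≤ (chemDist (SS ω) (0:Pt d) ((firstOnRay ω e : ℤ) • e)).toNat} ⊆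
        {ω : Config d | ⌊C4 * ((R+1 : ℕ) : ℝ)⌋₊ <
          (chemDist (SS ω) (0:Pt d) ((firstOnRay ω e : ℤ) • e)).toNat} := by
      intro ω hω
      exact lt_of_lt_of_le hM_lt hω
    have hstep := step1 P e he hmp c3 C3 Δ3 h3 c4 C4 Δ4 h4 R hR1
    -- bound the two exp terms
    have hexp3 : Real.exp (-c3 * (Real.log ((R:ℕ):ℝ)) ^ (1 + Δ3)) ≤ ((R:ℕ):ℝ) ^ (-q) :=
      exp_poly_bound c c3 Δ Δ3 q hc (min_le_left _ _) hΔ (min_le_left _ _) hq _ hR3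
        (le_trans (le_max_left _ _) hR₀R)
    have hR13 : (3:ℝ) ≤ ((R+1:ℕ):ℝ) := by push_cast; linarith
    have hexp4 : Real.exp (-c4 * (Real.log ((R+1:ℕ):ℝ)) ^ (1 + Δ4)) ≤ ((R+1:ℕ):ℝ) ^ (-q) :=
      exp_poly_bound c c4 Δ Δ4 q hc (min_le_right _ _) hΔ (min_le_right _ _) hq _ hR13
        (by push_cast; push_cast at hR₀R; linarith [le_trans (le_max_left (Real.exp ((q/c) ^ Δ⁻¹)) 3) hR₀R])
    -- convert to n
    have hconv3 : ((R:ℕ):ℝ) ^ (-q) ≤ a ^ q * (n:ℝ) ^ (-q) := by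
      apply conv_bound a q ha1 hq n hn _ hRpos
      refine le_of_lt ?_
      calc (n:ℝ) < (C4+1) * (((R:ℕ):ℝ) + 1) := hn_lt
      _ ≤ (C4+1) * (2 * ((R:ℕ):ℝ)) := by
          apply mul_le_mul_of_nonneg_left _ hC41.le
          linarith
      _ = a * ((R:ℕ):ℝ) := by rw [ha_def]; ring
    have hconv4 : ((R+1:ℕ):ℝ) ^ (-q) ≤ a ^ q * (n:ℝ) ^ (-q) := by
      apply conv_bound a q ha1 hq n hn _ (by push_cast; linarith)
      push_cast
      refine le_of_lt ?_
      calc (n:ℝ) < (C4+1) * (((R:ℕ):ℝ) + 1) := hn_lt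
      _ ≤ a * (((R:ℕ):ℝ) + 1) := by
          apply mul_le_mul_of_nonneg_right _ (by linarith)
          rw [ha_def]; linarith
    -- combine
    calc P _ ≤ P ({ω : Config d | ⌊C4 * ((R+1 : ℕ) : ℝ)⌋₊ <
            (chemDist (SS ω) (0:Pt d) ((firstOnRay ω e : ℤ) • e)).toNat} ∩
          {ω : Config d | (0 : Pt d) ∈ Sinf ω}) := by
          apply measure_mono (Set.inter_subset_inter_left _ hsub)
    _ ≤ ENNReal.ofReal (C3 * Real.exp (-c3 * (Real.log ((R:ℕ):ℝ)) ^ (1 + Δ3))) +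
        ENNReal.ofReal (C4 * Real.exp (-c4 * (Real.log ((R+1:ℕ):ℝ)) ^ (1 + Δ4))) := hstep
    _ ≤ ENNReal.ofReal (C3 * (a ^ q * (n:ℝ) ^ (-q))) +
        ENNReal.ofReal (C4 * (a ^ q * (n:ℝ) ^ (-q))) := by
        gcongr
        · exact le_trans hexp3 hconv3
        · exact le_trans hexp4 hconv4
    _ = ENNReal.ofReal ((C3 + C4) * a ^ q * (n:ℝ) ^ (-q)) := by
        rw [← ENNReal.ofReal_add (by positivity) (by positivity)]
        congr 1
        ring
    _ ≤ ENNReal.ofReal (K * (n : ℝ) ^ (-q)) := by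
        apply ENNReal.ofReal_le_ofReal
        apply mul_le_mul_of_nonneg_right (le_max_left _ _) hnq_inv_pos


/-- Under A1–A4, for every coordinate direction `e` and every `p ≥ 1` the
chemical distance `ρ_S(0, n_e·e)` has a finite `p`-th moment under `P₀ = P[·|0 ∈ S_∞]`. -/
theorem stmt18 (d : ℕ) (hd : 2 ≤ d) (P : Measure (Config d)) (hP : IsProbabilityMeasure P)
    -- A1
    (hA1 : ∀ e : Pt d, dist1 (0 : Pt d) e = 1 → Ergodic (shift e) P)
    -- A2
    (hA2 : ∀ᵐ ω ∂P, (Sinf ω).Nonempty ∧ ∀ x ∈ Sinf ω, ∀ y ∈ Sinf ω, connIn (SS ω) x y)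
    -- A3
    (hA3 : ∃ c > (0:ℝ), ∃ C > (0:ℝ), ∃ Δ₃ > (0:ℝ), ∀ R : ℕ, 1 ≤ R →
      ∀ e : Pt d, dist1 (0 : Pt d) e = 1 →
        1 - C * Real.exp (-c * (Real.log R) ^ (1 + Δ₃)) ≤
          (P {ω | ∃ k : ℕ, k ≤ R ∧ ((k : ℤ) • e) ∈ Sinf ω}).toReal)
    -- A4
    (hA4 : ∃ c > (0:ℝ), ∃ C > (0:ℝ), ∃ Δ₄ > (0:ℝ), ∀ R : ℕ, 1 ≤ R →
      1 - C * Real.exp (-c * (Real.log R) ^ (1 + Δ₄)) ≤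
        (P {ω | ∀ x ∈ Sinf ω ∩ ballZ (0 : Pt d) R, ∀ y ∈ Sinf ω ∩ ballZ (0 : Pt d) R,
            chemDist (SS ω) x y ≤ ((⌊C * (R : ℝ)⌋₊ : ℕ) : ℕ∞)}).toReal) :
    ∀ e : Pt d, dist1 (0 : Pt d) e = 1 → ∀ p : ℝ, 1 ≤ p →
      Integrable
        (fun ω =>
          (((chemDist (SS ω) (0 : Pt d) ((firstOnRay ω e : ℤ) • e)).toNat : ℝ)) ^ p)
        (ProbabilityTheory.cond P {ω | (0 : Pt d) ∈ Sinf ω}) := by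
  intro e he p hp
  haveI := hP
  obtain ⟨c3, hc3, C3, hC3, Δ3, hΔ3, h3⟩ := hA3
  obtain ⟨c4, hc4, C4, hC4, Δ4, hΔ4, h4⟩ := hA4
  set A : Set (Config d) := {ω | (0 : Pt d) ∈ Sinf ω} with hA_def
  have hAmeas : MeasurableSet A := measurableSet_mem_Sinf 0
  set rho : Config d → ℕ :=
    fun ω => (chemDist (SS ω) (0:Pt d) ((firstOnRay ω e : ℤ) • e)).toNat with hrho_def
  have hrho : Measurable rho := measurable_rho e
  set f : Config d → ℝ := fun ω => ((rho ω : ℝ)) ^ p with hf_def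
  have hf_meas : Measurable f :=
    (measurable_from_top (f := fun n : ℕ => ((n:ℝ)) ^ p)).comp hrho
  show Integrable f (ProbabilityTheory.cond P A)
  by_cases hPA : P A = 0
  · have hz : ProbabilityTheory.cond P A = 0 := by
      unfold ProbabilityTheory.cond
      rw [Measure.restrict_eq_zero.mpr hPA, smul_zero]
    rw [hz]
    exact integrable_zero_measure
  · have hcond : ProbabilityTheory.cond P A = (P A)⁻¹ • P.restrict A := rfl
    rw [hcond, integrable_smul_measure (ENNReal.inv_ne_zero.mpr (measure_ne_top P A))
      (ENNReal.inv_ne_top.mpr hPA)]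
    refine ⟨hf_meas.aestronglyMeasurable, ?_⟩
    -- tail bound
    obtain ⟨K, hK, htail⟩ := tail_poly P e he (hA1 e he).toMeasurePreserving
      c3 C3 Δ3 hc3 hC3 hΔ3 (fun R hR => h3 R hR e he)
      c4 C4 Δ4 hc4 hC4 hΔ4 (fun R hR => h4 R hR)
      (p + 2) (by linarith)
    have hp0 : p ≠ 0 := by linarith
    set h : ℕ → ℝ≥0∞ := fun n => ENNReal.ofReal ((n:ℝ) ^ p) with hh_def
    set G : ℕ → ℝ≥0∞ := fun n => ENNReal.ofReal (K * (n:ℝ) ^ (-(2:ℝ))) with hG_def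
    have hsummable : Summable (fun n : ℕ => K * (n:ℝ) ^ (-(2:ℝ))) := by
      apply Summable.mul_left K
      apply Summable.congr (Real.summable_one_div_nat_rpow.mpr (by norm_num : (1:ℝ) < 2))
      intro n
      rw [Real.rpow_neg (Nat.cast_nonneg n), inv_eq_one_div]
    have hGsum : ∑' n : ℕ, G n < ⊤ := by
      rw [hG_def, ← ENNReal.ofReal_tsum_of_nonneg
        (fun n => mul_nonneg hK (Real.rpow_nonneg (Nat.cast_nonneg n) _)) hsummable]
      exact ENNReal.ofReal_lt_top
    have hterm : ∀ n : ℕ, h n * P ({ω | n ≤ rho ω} ∩ A) ≤ G n := by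
      intro n
      rcases Nat.eq_zero_or_pos n with rfl | hn
      · have : h 0 = 0 := by
          simp only [hh_def, Nat.cast_zero]
          rw [Real.zero_rpow hp0]
          simp
        rw [this, zero_mul]
        exact zero_le
      · have h1 := htail n hn
        calc h n * P ({ω | n ≤ rho ω} ∩ A) ≤
            ENNReal.ofReal ((n:ℝ) ^ p) * ENNReal.ofReal (K * (n:ℝ) ^ (-(p+2))) := by
              exact mul_le_mul_right h1 _
        _ = ENNReal.ofReal ((n:ℝ) ^ p * (K * (n:ℝ) ^ (-(p+2)))) :=
              (ENNReal.ofReal_mul (Real.rpow_nonneg (Nat.cast_nonneg n) p)).symm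
        _ = G n := by
              rw [hG_def]
              congr 1
              have hn0 : (0:ℝ) < n := by exact_mod_cast hn
              rw [show (n:ℝ) ^ p * (K * (n:ℝ) ^ (-(p+2))) =
                K * ((n:ℝ) ^ p * (n:ℝ) ^ (-(p+2))) from by ring,
                ← Real.rpow_add hn0]
              congr 2
              ring
    -- compute the lintegral
    have hnorm : ∀ ω, (‖f ω‖₊ : ℝ≥0∞) = h (rho ω) := by
      intro ω
      rw [hh_def]
      exact Real.enorm_eq_ofReal (Real.rpow_nonneg (Nat.cast_nonneg _) p)
    rw [HasFiniteIntegral]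
    calc ∫⁻ ω, ‖f ω‖₊ ∂(P.restrict A) = ∫⁻ ω, h (rho ω) ∂(P.restrict A) :=
          lintegral_congr fun ω => hnorm ω
    _ = ∫⁻ n, h n ∂(Measure.map rho (P.restrict A)) :=
          (lintegral_map measurable_from_top hrho).symm
    _ = ∑' n : ℕ, h n * (Measure.map rho (P.restrict A)) {n} := lintegral_countable' h
    _ ≤ ∑' n : ℕ, G n := by
        apply ENNReal.tsum_le_tsum
        intro n
        refine le_trans ?_ (hterm n)
        apply mul_le_mul_right
        rw [Measure.map_apply hrho (MeasurableSet.singleton n),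
          Measure.restrict_apply (hrho (MeasurableSet.singleton n))]
        apply measure_mono
        apply Set.inter_subset_inter_left
        intro ω hω
        simp only [Set.mem_preimage, Set.mem_singleton_iff] at hω
        simp [hω]
    _ < ⊤ := hGsum


end Perco
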